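/- arXiv:2108.03059 — 2 statements merged into one kernel-verified Lean document; each statement's English description precedes it below -/
import Mathlib

section
/- Let c be a solvable configuration on G and A ⊆ V. Then A is not solvable if and only if x_A·p = 1 for exactly half of the solving patterns p for c (i.e., the number of solving patterns p for c with x_A·p = 1 equals the number with x_A·p = 0). Moreover, A is solvable if and only if either x_A·p = 1 for all solving patterns p for c, or x_A·p = 0 for all solving patterns p for c. -/
open Matrix
open scoped Classical

/-- The closed neighborhood matrix of a simple graph over `ℤ₂`:
`N(G) u v = 1` iff `u = v` or `u` is adjacent to `v`. -/
noncomputable def nbhdMatrix {V : Type*} [Fintype V] (G : SimpleGraph V) :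
    Matrix V V (ZMod 2) :=
  Matrix.of fun u v => if u = v ∨ G.Adj u v then 1 else 0

/-- The nullity of a matrix over `ℤ₂`: the dimension of its kernel. -/
noncomputable def nullityM {V : Type*} [Fintype V] (M : Matrix V V (ZMod 2)) : ℕ :=
  Module.finrank (ZMod 2) (LinearMap.ker M.mulVecLin)

/-- The nullity `ν(G)` of a graph. -/
noncomputable def graphNullity {V : Type*} [Fintype V] (G : SimpleGraph V) : ℕ :=
  nullityM (nbhdMatrix G)

/-- Characteristic vector of a set of vertices. -/
noncomputable def chi {V : Type*} (A : Set V) : V → ZMod 2 :=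
  fun v => if v ∈ A then 1 else 0

/-- A configuration `c` is solvable (w.r.t. the matrix `M`) if `M p = c` for some pattern `p`. -/
def Solv {V : Type*} [Fintype V] (M : Matrix V V (ZMod 2)) (c : V → ZMod 2) : Prop :=
  ∃ p : V → ZMod 2, M.mulVec p = c

noncomputable def dotB (V : Type*) [Fintype V] : LinearMap.BilinForm (ZMod 2) (V → ZMod 2) :=
  Matrix.toBilin' (1 : Matrix V V (ZMod 2))

lemma dotB_apply {V : Type*} [Fintype V] (x y : V → ZMod 2) : dotB V x y = x ⬝ᵥ y := by
  simp [dotB, Matrix.toBilin'_apply', Matrix.one_mulVec]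

lemma dotB_nondeg {V : Type*} [Fintype V] : (dotB V).Nondegenerate := by
  refine ⟨fun x hx => ?_, fun x hx => ?_⟩ <;> funext v
  · simpa [dotB_apply, dotProduct_single] using hx (Pi.single v 1)
  · simpa [dotB_apply, single_dotProduct] using hx (Pi.single v 1)

lemma dotB_refl {V : Type*} [Fintype V] : (dotB V).IsRefl := by
  intro x y h
  rw [dotB_apply] at h ⊢
  rwa [dotProduct_comm]

lemma key {V : Type*} [Fintype V] (M : Matrix V V (ZMod 2)) (hs : Mᵀ = M)
    (x : V → ZMod 2) (h : ∀ q, M.mulVec q = 0 → x ⬝ᵥ q = 0) :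
    ∃ p, M.mulVec p = x := by
  have horth : (dotB V).orthogonal (LinearMap.range M.mulVecLin)
      = LinearMap.ker M.mulVecLin := by
    ext q
    simp only [LinearMap.BilinForm.mem_orthogonal_iff, LinearMap.mem_ker,
      Matrix.mulVecLin_apply]
    constructor
    · intro hq
      funext v
      have := hq (M.mulVec (Pi.single v 1)) ⟨Pi.single v 1, rfl⟩
      rw [dotB_apply, dotProduct_comm,
        Matrix.dotProduct_mulVec, ← Matrix.mulVec_transpose, hs,
        dotProduct_single, mul_one] at this
      simpa using this
    · intro hq n hn
      obtain ⟨y, rfl⟩ := hn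
      rw [dotB_apply, Matrix.mulVecLin_apply,
        dotProduct_comm, Matrix.dotProduct_mulVec, ← Matrix.mulVec_transpose, hs]
      simp [hq]
  have hrange : LinearMap.range M.mulVecLin
      = (dotB V).orthogonal (LinearMap.ker M.mulVecLin) := by
    rw [← horth, LinearMap.BilinForm.orthogonal_orthogonal dotB_nondeg dotB_refl]
  have hx : x ∈ (dotB V).orthogonal (LinearMap.ker M.mulVecLin) := by
    intro n hn
    rw [dotB_apply, dotProduct_comm]
    exact h n hn
  rw [← hrange] at hx
  exact hx

lemma nbhd_symm {V : Type*} [Fintype V] (G : SimpleGraph V) :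
    (nbhdMatrix G)ᵀ = nbhdMatrix G := by
  ext u v
  simp only [Matrix.transpose_apply, nbhdMatrix, Matrix.of_apply]
  congr 1
  apply propext
  constructor
  · rintro (h | h)
    · exact Or.inl h.symm
    · exact Or.inr h.symm
  · rintro (h | h)
    · exact Or.inl h.symm
    · exact Or.inr h.symm

lemma zmod2_cases (a : ZMod 2) : a = 0 ∨ a = 1 := by revert a; decide

/-- Let `c` be a solvable configuration and `A ⊆ V`. Then `A` is not solvable iff
`x_A · p = 1` for exactly half of the solving patterns `p` for `c`; and `A` is solvable
iff either `x_A · p = 1` for all such `p`, or `x_A · p = 0` for all such `p`. -/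
theorem stmt7 {V : Type*} [Fintype V] (G : SimpleGraph V) (c : V → ZMod 2)
    (hc : Solv (nbhdMatrix G) c) (A : Set V) :
    (¬ Solv (nbhdMatrix G) (chi A) ↔
      {p : V → ZMod 2 | (nbhdMatrix G).mulVec p = c ∧ chi A ⬝ᵥ p = 1}.ncard =
        {p : V → ZMod 2 | (nbhdMatrix G).mulVec p = c ∧ chi A ⬝ᵥ p = 0}.ncard) ∧
    (Solv (nbhdMatrix G) (chi A) ↔
      ((∀ p : V → ZMod 2, (nbhdMatrix G).mulVec p = c → chi A ⬝ᵥ p = 1) ∨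
       (∀ p : V → ZMod 2, (nbhdMatrix G).mulVec p = c → chi A ⬝ᵥ p = 0))) := by
  set M := nbhdMatrix G with hM
  have hcc : ∀ x : V → ZMod 2, x + x = 0 := fun x => funext fun v => CharTwo.add_self_eq_zero _
  obtain ⟨p₀, hp₀⟩ := hc
  set S1 := {p : V → ZMod 2 | M.mulVec p = c ∧ chi A ⬝ᵥ p = 1} with hS1
  set S0 := {p : V → ZMod 2 | M.mulVec p = c ∧ chi A ⬝ᵥ p = 0} with hS0
  -- easy direction: solvable implies constant
  have heasy : Solv M (chi A) →
      ((∀ p : V → ZMod 2, M.mulVec p = c → chi A ⬝ᵥ p = 1) ∨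
       (∀ p : V → ZMod 2, M.mulVec p = c → chi A ⬝ᵥ p = 0)) := by
    rintro ⟨pA, hpA⟩
    have hconst : ∀ p : V → ZMod 2, M.mulVec p = c → chi A ⬝ᵥ p = pA ⬝ᵥ c := by
      intro p hp
      rw [← hpA, dotProduct_comm, Matrix.dotProduct_mulVec,
        ← Matrix.mulVec_transpose, nbhd_symm, ← hM, dotProduct_comm, hp]
    rcases zmod2_cases (pA ⬝ᵥ c) with h | h
    · exact Or.inr (fun p hp => (hconst p hp).trans h)
    · exact Or.inl (fun p hp => (hconst p hp).trans h)
  -- hard direction: constant implies solvable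
  have hhard : ((∀ p : V → ZMod 2, M.mulVec p = c → chi A ⬝ᵥ p = 1) ∨
       (∀ p : V → ZMod 2, M.mulVec p = c → chi A ⬝ᵥ p = 0)) → Solv M (chi A) := by
    intro hconst
    apply key M (by rw [hM]; exact nbhd_symm G)
    intro q hq
    have hq' : M.mulVec (p₀ + q) = c := by
      rw [Matrix.mulVec_add, hp₀, hq, add_zero]
    have hd : chi A ⬝ᵥ (p₀ + q) = chi A ⬝ᵥ p₀ + chi A ⬝ᵥ q := dotProduct_add _ _ _
    rcases hconst with h | h
    · have := (h _ hq').trans (h p₀ hp₀).symm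
      rw [hd, h p₀ hp₀] at this
      rcases zmod2_cases (chi A ⬝ᵥ q) with h2 | h2
      · exact h2
      · rw [h2] at this; exact absurd this (by decide)
    · have := (h _ hq').trans (h p₀ hp₀).symm
      rw [hd, h p₀ hp₀] at this
      rcases zmod2_cases (chi A ⬝ᵥ q) with h2 | h2
      · exact h2
      · rw [h2] at this; exact absurd this (by decide)
  -- not constant implies equal counts
  have hcount : ¬((∀ p : V → ZMod 2, M.mulVec p = c → chi A ⬝ᵥ p = 1) ∨
       (∀ p : V → ZMod 2, M.mulVec p = c → chi A ⬝ᵥ p = 0)) →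
      S1.ncard = S0.ncard := by
    intro hnc
    push_neg at hnc
    obtain ⟨⟨p1, hp1, hp1'⟩, ⟨q0, hq0, hq0'⟩⟩ := hnc
    have hp1d : chi A ⬝ᵥ p1 = 0 := (zmod2_cases _).resolve_right hp1'
    have hq0d : chi A ⬝ᵥ q0 = 1 := by
      rcases zmod2_cases (chi A ⬝ᵥ q0) with h | h
      · exact absurd h hq0'
      · exact h
    set q := p1 + q0 with hqdef
    have hMq : M.mulVec q = 0 := by
      rw [hqdef, Matrix.mulVec_add, hp1, hq0, hcc]
    have hdq : chi A ⬝ᵥ q = 1 := by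
      rw [hqdef, dotProduct_add, hp1d, hq0d, zero_add]
    have himg : (fun p => p + q) '' S1 = S0 := by
      ext p
      constructor
      · rintro ⟨r, ⟨hr1, hr2⟩, rfl⟩
        refine ⟨by rw [Matrix.mulVec_add, hr1, hMq, add_zero], ?_⟩
        rw [dotProduct_add, hr2, hdq]
        decide
      · rintro ⟨h1, h2⟩
        refine ⟨p + q, ⟨?_, ?_⟩, ?_⟩
        · rw [Matrix.mulVec_add, h1, hMq, add_zero]
        · rw [dotProduct_add, h2, hdq, zero_add]
        · show p + q + q = p
          rw [add_assoc, hcc, add_zero]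
    calc S1.ncard = ((fun p => p + q) '' S1).ncard :=
          (Set.ncard_image_of_injective _ (add_left_injective q)).symm
      _ = S0.ncard := by rw [himg]
  constructor
  · constructor
    · intro hns
      exact hcount (fun h => hns (hhard h))
    · intro heq hsolv
      rcases heasy hsolv with h | h
      · have h0 : S0 = ∅ := by
          ext p
          simp only [hS0, Set.mem_setOf_eq, Set.mem_empty_iff_false, iff_false]
          rintro ⟨h1, h2⟩
          rw [h p h1] at h2
          exact absurd h2 (by decide)
        have h1ne : S1.Nonempty := ⟨p₀, hp₀, h p₀ hp₀⟩
        rw [h0, Set.ncard_empty] at heq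
        exact (Set.ncard_pos (Set.toFinite S1)).mpr h1ne |>.ne' heq
      · have h0 : S1 = ∅ := by
          ext p
          simp only [hS1, Set.mem_setOf_eq, Set.mem_empty_iff_false, iff_false]
          rintro ⟨h1, h2⟩
          rw [h p h1] at h2
          exact absurd h2 (by decide)
        have h1ne : S0.Nonempty := ⟨p₀, hp₀, h p₀ hp₀⟩
        rw [h0, Set.ncard_empty] at heq
        exact ((Set.ncard_pos (Set.toFinite S0)).mpr h1ne).ne' heq.symm
  · exact ⟨heasy, hhard⟩
end

section
/- Let A ⊆ V be a solvable set in G. Then for every odd dominating pattern s of G and every solving pattern r for x_A, one has x_A·s = x_A·r. Consequently, A is AO if and only if A is x_A-AO, and A is NO if and only if A is x_A-NO. -/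
open Matrix
open scoped Classical

/-- `A` is `c`-always odd activated: `A` is solvable and `x_A · p = 1` for every solving
pattern `p` for `c`. -/
def cAO {V : Type*} [Fintype V] (M : Matrix V V (ZMod 2)) (c : V → ZMod 2)
    (A : Set V) : Prop :=
  Solv M (chi A) ∧ ∀ p : V → ZMod 2, M.mulVec p = c → chi A ⬝ᵥ p = 1

/-- `A` is `c`-never odd activated: `A` is solvable and `x_A · p = 0` for every solving
pattern `p` for `c`. -/
def cNO {V : Type*} [Fintype V] (M : Matrix V V (ZMod 2)) (c : V → ZMod 2)
    (A : Set V) : Prop :=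
  Solv M (chi A) ∧ ∀ p : V → ZMod 2, M.mulVec p = c → chi A ⬝ᵥ p = 0

/-- `A` is always odd activated (AO): `𝟏`-always odd activated. -/
def AO {V : Type*} [Fintype V] (M : Matrix V V (ZMod 2)) (A : Set V) : Prop :=
  cAO M 1 A

/-- `A` is never odd activated (NO): `𝟏`-never odd activated. -/
def NO {V : Type*} [Fintype V] (M : Matrix V V (ZMod 2)) (A : Set V) : Prop :=
  cNO M 1 A

/-- `A` is half odd activated (HO): `x_A` is not solvable. -/
def HO {V : Type*} [Fintype V] (M : Matrix V V (ZMod 2)) (A : Set V) : Prop :=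
  ¬ Solv M (chi A)

section Aux
variable {V : Type*} [Fintype V] (G : SimpleGraph V)

lemma nbhd_apply_symm (u v : V) : nbhdMatrix G u v = nbhdMatrix G v u := by
  simp only [nbhdMatrix, Matrix.of_apply]
  rw [eq_comm (a := u), G.adj_comm]

lemma nbhd_symm_s9 : (nbhdMatrix G)ᵀ = nbhdMatrix G := by
  ext u v
  rw [Matrix.transpose_apply, nbhd_apply_symm]

lemma quad (r : V → ZMod 2) : r ⬝ᵥ (nbhdMatrix G).mulVec r = ∑ v, r v := by
  classical
  have h1 : r ⬝ᵥ (nbhdMatrix G).mulVec r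
      = ∑ p ∈ Finset.univ ×ˢ Finset.univ, r p.1 * nbhdMatrix G p.1 p.2 * r p.2 := by
    rw [Finset.sum_product]
    simp [dotProduct, Matrix.mulVec, Finset.mul_sum, mul_assoc]
  rw [h1, ← Finset.sum_filter_add_sum_filter_not _ (fun p : V × V => p.1 = p.2)]
  have h2 : ∑ p ∈ (Finset.univ ×ˢ Finset.univ).filter (fun p : V × V => ¬ p.1 = p.2),
      r p.1 * nbhdMatrix G p.1 p.2 * r p.2 = 0 := by
    refine Finset.sum_involution (fun p _ => Prod.swap p) ?_ ?_ ?_ ?_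
    · intro p hp
      have hs : nbhdMatrix G p.2 p.1 = nbhdMatrix G p.1 p.2 := nbhd_apply_symm G p.2 p.1
      show r p.1 * nbhdMatrix G p.1 p.2 * r p.2 + r p.swap.1 * nbhdMatrix G p.swap.1 p.swap.2 * r p.swap.2 = 0
      simp only [Prod.fst_swap, Prod.snd_swap, hs]
      have h2z : (2 : ZMod 2) = 0 := rfl
      have : r p.1 * nbhdMatrix G p.1 p.2 * r p.2 + r p.2 * nbhdMatrix G p.1 p.2 * r p.1
          = 2 * (r p.1 * nbhdMatrix G p.1 p.2 * r p.2) := by ring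
      rw [this, h2z, zero_mul]
    · intro p hp _
      simp only [Finset.mem_filter] at hp
      intro h
      have := congrArg Prod.fst h
      simp only [Prod.fst_swap] at this
      exact hp.2 this.symm
    · intro p hp
      simp only [Finset.mem_filter, Finset.mem_product] at hp ⊢
      exact ⟨⟨Finset.mem_univ _, Finset.mem_univ _⟩, fun h => hp.2 h.symm⟩
    · intro p hp; rfl
  rw [h2, add_zero]
  rw [Finset.sum_filter]
  rw [Finset.sum_product]
  have h3 : ∀ u : V, (∑ v, if u = v then r u * nbhdMatrix G u v * r v else 0) = r u := by
    intro u
    rw [Finset.sum_ite_eq (Finset.univ) u (fun v => r u * nbhdMatrix G u v * r v)]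
    simp only [Finset.mem_univ, if_true]
    have : nbhdMatrix G u u = 1 := by simp [nbhdMatrix]
    rw [this, mul_one]
    have hsq : ∀ a : ZMod 2, a * a = a := by decide
    exact hsq (r u)
  calc ∑ u, ∑ v, (if u = v then r u * nbhdMatrix G u v * r v else 0) = ∑ u, r u := by
        exact Finset.sum_congr rfl fun u _ => h3 u

lemma sutner : Solv (nbhdMatrix G) 1 := by
  classical
  by_contra hns
  have h1 : (1 : V → ZMod 2) ∉ LinearMap.range (nbhdMatrix G).mulVecLin := by
    intro h
    obtain ⟨p, hp⟩ := h
    exact hns ⟨p, hp⟩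
  obtain ⟨f, hf, hmap⟩ := Submodule.exists_dual_map_eq_bot_of_notMem h1 inferInstance
  set y : V → ZMod 2 := fun v => f (Pi.single v 1) with hy
  have hfx : ∀ x : V → ZMod 2, f x = y ⬝ᵥ x := by
    intro x
    rw [LinearMap.pi_apply_eq_sum_univ f x]
    have hsingle : ∀ u : V, (fun j => if u = j then (1 : ZMod 2) else 0) = Pi.single u 1 := by
      intro u; ext j; simp [Pi.single_apply, eq_comm]
    simp only [dotProduct, y, smul_eq_mul]
    refine Finset.sum_congr rfl fun u _ => ?_
    rw [hsingle u, mul_comm]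
  -- y kills the range of N, so Nᵀ y = 0, so N y = 0
  have hker : (nbhdMatrix G).mulVec y = 0 := by
    have hz : ∀ x : V → ZMod 2, y ⬝ᵥ (nbhdMatrix G).mulVec x = 0 := by
      intro x
      rw [← hfx]
      have : (nbhdMatrix G).mulVec x ∈ LinearMap.range (nbhdMatrix G).mulVecLin :=
        ⟨x, rfl⟩
      have := Submodule.mem_map_of_mem (f := f) this
      rw [hmap] at this
      exact (Submodule.mem_bot (ZMod 2)).mp this
    ext u
    have h0 := hz (Pi.single u 1)
    rw [Matrix.mulVec_single, dotProduct_comm] at h0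
    simp only [dotProduct, MulOpposite.op_one, Pi.smul_apply, smul_eq_mul, mul_one] at h0
    have : ((nbhdMatrix G).mulVec y) u = ∑ x, nbhdMatrix G x u * y x := by
      simp only [Matrix.mulVec, dotProduct]
      exact Finset.sum_congr rfl fun x _ => by rw [nbhd_apply_symm G u x]
    rw [this]
    simpa using h0
  -- but then f 1 = y ⬝ 1 = Σ y = y ⬝ N y = 0, contradiction
  have : f 1 = 0 := by
    rw [hfx]
    have hq := quad G y
    rw [hker] at hq
    simp only [dotProduct_zero] at hq
    simp [dotProduct, ← hq]
  exact hf this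

lemma key_s9 {A : Set V} (s r : V → ZMod 2) (hs : (nbhdMatrix G).mulVec s = 1)
    (hr : (nbhdMatrix G).mulVec r = chi A) : chi A ⬝ᵥ s = chi A ⬝ᵥ r := by
  have h1 : chi A ⬝ᵥ s = ∑ v, r v := by
    rw [← hr, dotProduct_comm, Matrix.dotProduct_mulVec, ← Matrix.mulVec_transpose,
      nbhd_symm_s9, hs]
    simp [dotProduct]
  have h2 : chi A ⬝ᵥ r = ∑ v, r v := by
    rw [← hr, dotProduct_comm, quad]
  rw [h1, h2]

end Aux

/-- For a solvable set `A`: `x_A · s = x_A · r` for every odd dominating pattern `s` and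
every solving pattern `r` for `x_A`; consequently `A` is AO iff `A` is `x_A`-AO and `A`
is NO iff `A` is `x_A`-NO. -/

theorem stmt9 {V : Type*} [Fintype V] (G : SimpleGraph V) (A : Set V)
    (hA : Solv (nbhdMatrix G) (chi A)) :
    (∀ s r : V → ZMod 2, (nbhdMatrix G).mulVec s = 1 →
      (nbhdMatrix G).mulVec r = chi A → chi A ⬝ᵥ s = chi A ⬝ᵥ r) ∧
    (AO (nbhdMatrix G) A ↔ cAO (nbhdMatrix G) (chi A) A) ∧
    (NO (nbhdMatrix G) A ↔ cNO (nbhdMatrix G) (chi A) A) := by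
  refine ⟨fun s r hs hr => key_s9 G s r hs hr, ?_, ?_⟩
  · constructor
    · rintro ⟨hsolv, h⟩
      refine ⟨hsolv, fun r hr => ?_⟩
      obtain ⟨s, hs⟩ := sutner G
      rw [← key_s9 G s r hs hr]
      exact h s hs
    · rintro ⟨hsolv, h⟩
      refine ⟨hsolv, fun s hs => ?_⟩
      obtain ⟨r, hr⟩ := hA
      rw [key_s9 G s r hs hr]
      exact h r hr
  · constructor
    · rintro ⟨hsolv, h⟩
      refine ⟨hsolv, fun r hr => ?_⟩
      obtain ⟨s, hs⟩ := sutner G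
      rw [← key_s9 G s r hs hr]
      exact h s hs
    · rintro ⟨hsolv, h⟩
      refine ⟨hsolv, fun s hs => ?_⟩
      obtain ⟨r, hr⟩ := hA
      rw [key_s9 G s r hs hr]
      exact h r hr
end
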